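/- Let n ≥ 2, f the piecewise linear function above, A(x,t) = |f(t+x)+f(t-x)-2f(t)|, and φ_n(x) = c_n(1-x²/4)^{n²} with ∫_{-2}^2 φ_n = 1. Then ∫₀² ∫₀¹ (A(x,t)/t) dt φ_n(x) dx = o(log n) as n → ∞, i.e. the ratio of this double integral to log n tends to 0. -/

import Mathlib

open Real MeasureTheory Filter


noncomputable def F (n : ℕ) (t : ℝ) : ℝ :=
  max (-1) (min 1 ((n : ℝ) * t)) * max 0 (min 1 ((n : ℝ) * (1 - |t|)))

lemma clamp_lip (c a b : ℝ) : |max c (min 1 a) - max c (min 1 b)| ≤ |a - b| := by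
  have h1 : |min 1 a - min 1 b| ≤ |a - b| := by
    have h := abs_min_sub_min_le_max 1 a 1 b
    simpa using h
  calc |max c (min 1 a) - max c (min 1 b)|
      = |max (min 1 a) c - max (min 1 b) c| := by rw [max_comm, max_comm c]
    _ ≤ |min 1 a - min 1 b| := abs_max_sub_max_le_abs _ _ _
    _ ≤ |a - b| := h1

lemma clamp_neg (u : ℝ) : max (-1) (min 1 (-u)) = - max (-1) (min 1 u) := by
  rcases le_total u (-1) with h | h
  · rw [min_eq_left (show (1:ℝ) ≤ -u by linarith),
      max_eq_right (show (-1:ℝ) ≤ 1 by norm_num),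
      min_eq_right (show u ≤ (1:ℝ) by linarith), max_eq_left h]
    norm_num
  · rcases le_total u 1 with h2 | h2
    · rw [min_eq_right (show -u ≤ (1:ℝ) by linarith),
        max_eq_right (show (-1:ℝ) ≤ -u by linarith), min_eq_right h2,
        max_eq_right h]
    · rw [min_eq_right (show -u ≤ (1:ℝ) by linarith),
        max_eq_left (show -u ≤ (-1:ℝ) by linarith), min_eq_left h2,
        max_eq_right (show (-1:ℝ) ≤ 1 by norm_num)]

lemma F_abs_le_one (n : ℕ) (t : ℝ) : |F n t| ≤ 1 := by
  rw [F, abs_mul]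
  have h1 : |max (-1:ℝ) (min 1 ((n : ℝ) * t))| ≤ 1 := by
    rw [abs_le]; exact ⟨le_max_left _ _, max_le (by norm_num) (min_le_left _ _)⟩
  have h2 : |max (0:ℝ) (min 1 ((n : ℝ) * (1 - |t|)))| ≤ 1 := by
    rw [abs_le]
    refine ⟨by linarith [le_max_left (0:ℝ) (min 1 ((n : ℝ) * (1 - |t|)))],
      max_le (by norm_num) (min_le_left _ _)⟩
  calc |max (-1:ℝ) (min 1 ((n : ℝ) * t))| * |max (0:ℝ) (min 1 ((n : ℝ) * (1 - |t|)))|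
      ≤ 1 * 1 := mul_le_mul h1 h2 (abs_nonneg _) zero_le_one
    _ = 1 := by ring

lemma F_neg (n : ℕ) (t : ℝ) : F n (-t) = - F n t := by
  rw [F, F, abs_neg, mul_neg, clamp_neg, neg_mul]

lemma F_zero (n : ℕ) : F n 0 = 0 := by
  rw [F]; norm_num

lemma F_lip (n : ℕ) (a b : ℝ) : |F n a - F n b| ≤ 2 * n * |a - b| := by
  unfold F
  set p := max (-1:ℝ) (min 1 ((n : ℝ) * a)) with hpdef
  set p' := max (-1:ℝ) (min 1 ((n : ℝ) * b)) with hp'def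
  set q := max (0:ℝ) (min 1 ((n : ℝ) * (1 - |a|))) with hqdef
  set q' := max (0:ℝ) (min 1 ((n : ℝ) * (1 - |b|))) with hq'def
  have hp : |p - p'| ≤ (n:ℝ) * |a - b| := by
    calc |p - p'| ≤ |(n:ℝ)*a - (n:ℝ)*b| := clamp_lip _ _ _
      _ = (n:ℝ) * |a - b| := by rw [← mul_sub, abs_mul, Nat.abs_cast]
  have hq : |q - q'| ≤ (n:ℝ) * |a - b| := by
    have step1 : |q - q'| ≤ |(n:ℝ)*(1-|a|) - (n:ℝ)*(1-|b|)| := clamp_lip _ _ _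
    have step2 : |(n:ℝ)*(1-|a|) - (n:ℝ)*(1-|b|)| = (n:ℝ) * abs (|b| - |a|) := by
      rw [show (n:ℝ)*(1-|a|) - (n:ℝ)*(1-|b|) = (n:ℝ) * (|b| - |a|) by ring,
        abs_mul, Nat.abs_cast]
    have step3 : abs (|b| - |a|) ≤ |a - b| := by
      have := abs_abs_sub_abs_le_abs_sub b a
      have h2 : |b - a| = |a - b| := abs_sub_comm b a
      linarith
    calc |q - q'| ≤ (n:ℝ) * abs (|b| - |a|) := by rw [← step2]; exact step1
      _ ≤ (n:ℝ) * |a - b| := mul_le_mul_of_nonneg_left step3 (Nat.cast_nonneg n)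
  have hpb : |p'| ≤ 1 := by
    rw [abs_le]; exact ⟨le_max_left _ _, max_le (by norm_num) (min_le_left _ _)⟩
  have hqb : |q| ≤ 1 := by
    rw [abs_le]
    exact ⟨by linarith [le_max_left (0:ℝ) (min 1 ((n : ℝ) * (1 - |a|)))],
      max_le (by norm_num) (min_le_left _ _)⟩
  calc |p * q - p' * q'| = |(p - p') * q + p' * (q - q')| := by
        rw [show p * q - p' * q' = (p - p') * q + p' * (q - q') from by ring]
    _ ≤ |(p - p') * q| + |p' * (q - q')| := abs_add_le _ _
    _ = |p - p'| * |q| + |p'| * |q - q'| := by rw [abs_mul, abs_mul]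
    _ ≤ ((n:ℝ) * |a - b|) * 1 + 1 * ((n:ℝ) * |a - b|) :=
        add_le_add (mul_le_mul hp hqb (abs_nonneg _) (by positivity))
          (mul_le_mul hpb hq (abs_nonneg _) zero_le_one)
    _ = 2 * n * |a - b| := by ring

lemma F_one (n : ℕ) (hn : 2 ≤ n) (t : ℝ) (h1 : 1/(n:ℝ) ≤ t) (h2 : t ≤ 1 - 1/(n:ℝ)) :
    F n t = 1 := by
  have hn0 : (0:ℝ) < n := by positivity
  have ht0 : 0 ≤ t := le_trans (by positivity) h1
  have hnt : (1:ℝ) ≤ (n:ℝ) * t := by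
    rw [div_le_iff₀ hn0] at h1; linarith
  have hnt2 : (1:ℝ) ≤ (n:ℝ) * (1 - |t|) := by
    rw [abs_of_nonneg ht0]
    have h3 : 1/(n:ℝ) ≤ 1 - t := by linarith
    rw [div_le_iff₀ hn0] at h3; linarith
  rw [F, min_eq_left hnt, min_eq_left hnt2, max_eq_right (by norm_num),
    max_eq_right (by norm_num), mul_one]

lemma F_cont (n : ℕ) : Continuous (F n) := by
  unfold F; fun_prop

noncomputable def Af (n : ℕ) (x t : ℝ) : ℝ := |F n (t + x) + F n (t - x) - 2 * F n t|

lemma Af_le_four (n : ℕ) (x t : ℝ) : Af n x t ≤ 4 := by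
  have h1 := F_abs_le_one n (t+x)
  have h2 := F_abs_le_one n (t-x)
  have h3 := F_abs_le_one n t
  rw [Af]
  rw [abs_le] at h1 h2 h3 ⊢
  constructor <;> [linarith; linarith]

lemma Af_le_lin (n : ℕ) (x t : ℝ) (ht : 0 ≤ t) : Af n x t ≤ 8 * n * t := by
  have h1 := F_lip n (t+x) x
  have h2 := F_lip n (t-x) (-x)
  have h3 := F_lip n t 0
  rw [show t + x - x = t by ring, abs_of_nonneg ht] at h1
  rw [show t - x - (-x) = t by ring, abs_of_nonneg ht] at h2
  rw [sub_zero, abs_of_nonneg ht] at h3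
  have e : F n (t+x) + F n (t-x) - 2 * F n t
      = (F n (t+x) - F n x) + (F n (t-x) - F n (-x)) - 2*(F n t - F n 0) := by
    rw [F_neg, F_zero]; ring
  rw [Af, e]
  calc |(F n (t+x) - F n x) + (F n (t-x) - F n (-x)) - 2*(F n t - F n 0)|
      ≤ |(F n (t+x) - F n x) + (F n (t-x) - F n (-x))| + |2*(F n t - F n 0)| :=
        abs_sub _ _
    _ ≤ |F n (t+x) - F n x| + |F n (t-x) - F n (-x)| + 2 * |F n t - F n 0| := by
        have := abs_add_le (F n (t+x) - F n x) (F n (t-x) - F n (-x))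
        rw [abs_mul, abs_two]; linarith
    _ ≤ 2*n*t + 2*n*t + 2*(2*n*t) := by linarith
    _ = 8 * n * t := by ring

lemma Af_zero (n : ℕ) (hn : 2 ≤ n) (x t : ℝ) (hx : 0 ≤ x)
    (h1 : 1/(n:ℝ) ≤ t - x) (h2 : t + x ≤ 1 - 1/(n:ℝ)) : Af n x t = 0 := by
  have e1 : F n (t + x) = 1 := F_one n hn _ (by linarith) h2
  have e2 : F n (t - x) = 1 := F_one n hn _ h1 (by linarith)
  have e3 : F n t = 1 := F_one n hn _ (by linarith) (by linarith)
  rw [Af, e1, e2, e3]; norm_num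

lemma Af_cont (n : ℕ) (x : ℝ) : Continuous fun t => Af n x t := by
  unfold Af
  exact ((((F_cont n).comp (continuous_id.add continuous_const)).add
    ((F_cont n).comp (continuous_id.sub continuous_const))).sub
    (continuous_const.mul (F_cont n))).abs

lemma Af_div_nonneg (n : ℕ) (x t : ℝ) (ht : 0 ≤ t) : 0 ≤ Af n x t / t :=
  div_nonneg (abs_nonneg _) ht

lemma Af_div_le (n : ℕ) (x t : ℝ) (ht : 0 ≤ t) : Af n x t / t ≤ 8 * n := by
  rcases eq_or_lt_of_le ht with h | h
  · rw [← h, div_zero]; positivity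
  · rw [div_le_iff₀ h]; exact Af_le_lin n x t ht

lemma Af_div_le' (n : ℕ) (x t : ℝ) (ht : 0 < t) : Af n x t / t ≤ 4 / t :=
  div_le_div_of_nonneg_right (Af_le_four n x t) ht.le

lemma Af_intable (n : ℕ) (x : ℝ) :
    IntervalIntegrable (fun t => Af n x t / t) volume 0 1 := by
  have hmeas : Measurable fun t => Af n x t / t :=
    (Af_cont n x).measurable.div measurable_id
  apply IntervalIntegrable.mono_fun' (g := fun _ => (8*n : ℝ))
    intervalIntegrable_const hmeas.aestronglyMeasurable
  rw [Set.uIoc_of_le (by norm_num : (0:ℝ) ≤ 1)]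
  refine (ae_restrict_iff' measurableSet_Ioc).mpr (ae_of_all _ fun t ht => ?_)
  show ‖Af n x t / t‖ ≤ 8 * (n:ℝ)
  rw [Real.norm_eq_abs, abs_of_nonneg (Af_div_nonneg n x t ht.1.le)]
  exact Af_div_le n x t ht.1.le

lemma piece_const (n : ℕ) (x a : ℝ) (ha : 0 ≤ a) (ha1 : a ≤ 1) :
    ∫ t in (0:ℝ)..a, Af n x t / t ≤ 8 * n * a := by
  have hsub : Set.uIcc 0 a ⊆ Set.uIcc (0:ℝ) 1 := by
    rw [Set.uIcc_of_le ha, Set.uIcc_of_le (by norm_num : (0:ℝ) ≤ 1)]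
    exact Set.Icc_subset_Icc le_rfl ha1
  have hint : IntervalIntegrable (fun t => Af n x t / t) volume 0 a :=
    (Af_intable n x).mono_set hsub
  calc ∫ t in (0:ℝ)..a, Af n x t / t ≤ ∫ t in (0:ℝ)..a, (8*n : ℝ) :=
        intervalIntegral.integral_mono_on ha hint intervalIntegrable_const
          (fun t htt => Af_div_le n x t htt.1)
    _ = 8 * n * a := by rw [intervalIntegral.integral_const, smul_eq_mul, sub_zero]; ring

lemma piece_inv (n : ℕ) (x a b : ℝ) (ha : 0 < a) (hab : a ≤ b) (hb : b ≤ 1) :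
    ∫ t in a..b, Af n x t / t ≤ 4 * Real.log (b/a) := by
  have hsub : Set.uIcc a b ⊆ Set.uIcc (0:ℝ) 1 := by
    rw [Set.uIcc_of_le hab, Set.uIcc_of_le (by norm_num : (0:ℝ) ≤ 1)]
    exact Set.Icc_subset_Icc ha.le hb
  have hint : IntervalIntegrable (fun t => Af n x t / t) volume a b :=
    (Af_intable n x).mono_set hsub
  have hne : ∀ t ∈ Set.uIcc a b, t ≠ 0 := by
    intro t htt
    rw [Set.uIcc_of_le hab] at htt
    exact ne_of_gt (lt_of_lt_of_le ha htt.1)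
  have hmaj : IntervalIntegrable (fun t => 4 * (1/t)) volume a b := by
    apply ContinuousOn.intervalIntegrable
    exact continuousOn_const.mul (continuousOn_const.div continuousOn_id hne)
  calc ∫ t in a..b, Af n x t / t ≤ ∫ t in a..b, 4 * (1/t) := by
        apply intervalIntegral.integral_mono_on hab hint hmaj
        intro t htt
        have ht : 0 < t := lt_of_lt_of_le ha htt.1
        rw [mul_one_div]
        exact Af_div_le' n x t ht
    _ = 4 * Real.log (b/a) := by
        rw [intervalIntegral.integral_const_mul, integral_one_div]
        intro h0
        exact (hne 0 h0) rfl

lemma inner_nonneg (n : ℕ) (x : ℝ) : 0 ≤ ∫ t in (0:ℝ)..1, Af n x t / t :=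
  intervalIntegral.integral_nonneg (by norm_num)
    (fun t ht => Af_div_nonneg n x t ht.1)

lemma inner_crude (n : ℕ) (hn : 2 ≤ n) (x : ℝ) :
    ∫ t in (0:ℝ)..1, Af n x t / t ≤ 4 + 4 * Real.log (2*n) := by
  have hn0 : (0:ℝ) < n := by positivity
  set a : ℝ := 1/(2*(n:ℝ)) with hadef
  have ha : 0 < a := by positivity
  have ha1 : a ≤ 1 := by
    rw [hadef, div_le_one (by positivity)]
    have : (1:ℝ) ≤ (n:ℝ) := by exact_mod_cast Nat.one_le_of_lt hn
    linarith
  have hsub1 : Set.uIcc 0 a ⊆ Set.uIcc (0:ℝ) 1 := by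
    rw [Set.uIcc_of_le ha.le, Set.uIcc_of_le (by norm_num : (0:ℝ) ≤ 1)]
    exact Set.Icc_subset_Icc le_rfl ha1
  have hsub2 : Set.uIcc a 1 ⊆ Set.uIcc (0:ℝ) 1 := by
    rw [Set.uIcc_of_le ha1, Set.uIcc_of_le (by norm_num : (0:ℝ) ≤ 1)]
    exact Set.Icc_subset_Icc ha.le le_rfl
  have hsplit := intervalIntegral.integral_add_adjacent_intervals
    ((Af_intable n x).mono_set hsub1) ((Af_intable n x).mono_set hsub2)
  have b1 : ∫ t in (0:ℝ)..a, Af n x t / t ≤ 4 := by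
    have := piece_const n x a ha.le ha1
    have e : 8 * (n:ℝ) * a = 4 := by rw [hadef]; field_simp; ring
    linarith
  have b2 : ∫ t in a..1, Af n x t / t ≤ 4 * Real.log (2*n) := by
    have h := piece_inv n x a 1 ha ha1 le_rfl
    rwa [hadef, one_div_one_div] at h
  linarith [hsplit]

lemma inner_small (n : ℕ) (hn : 4 ≤ n) (x : ℝ) (hx0 : 0 ≤ x) (hx : x ≤ 1/4) :
    ∫ t in (0:ℝ)..1, Af n x t / t ≤ 8 + 4 * Real.log 2 + 4*n*x + 8*x := by
  have hn0 : (0:ℝ) < n := by positivity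
  have hn4 : (4:ℝ) ≤ n := by exact_mod_cast hn
  obtain ⟨a, hadef⟩ : ∃ a:ℝ, a = 1/(2*(n:ℝ)) := ⟨_, rfl⟩
  obtain ⟨e, hedef⟩ : ∃ e:ℝ, e = x + 1/(n:ℝ) := ⟨_, rfl⟩
  have ha : 0 < a := by rw [hadef]; positivity
  have hinv : 1/(n:ℝ) ≤ 1/4 := by
    rw [div_le_div_iff₀ (by positivity) (by norm_num)]; linarith
  have hae : a ≤ e := by
    rw [hadef, hedef]
    have h : 1/(2*(n:ℝ)) ≤ 1/(n:ℝ) := by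
      rw [div_le_div_iff₀ (by positivity) (by positivity)]; linarith
    linarith
  have he2 : e ≤ 1/2 := by
    rw [hedef]
    linarith
  have hee : e ≤ 1 - e := by linarith
  have he1 : 1 - e ≤ 1 := by
    rw [hedef]; have : 0 < 1/(n:ℝ) := by positivity
    linarith
  have he0 : 0 < e := by
    have h : 0 < 1/(n:ℝ) := by positivity
    rw [hedef]; linarith
  have sub : ∀ u v : ℝ, 0 ≤ u → u ≤ v → v ≤ 1 →
      IntervalIntegrable (fun t => Af n x t / t) volume u v := by
    intro u v hu huv hv
    refine (Af_intable n x).mono_set ?_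
    rw [Set.uIcc_of_le huv, Set.uIcc_of_le (by norm_num : (0:ℝ) ≤ 1)]
    exact Set.Icc_subset_Icc hu hv
  have hs1 := intervalIntegral.integral_add_adjacent_intervals
    (sub 0 a le_rfl ha.le (by linarith)) (sub a e ha.le hae (by linarith))
  have hs2 := intervalIntegral.integral_add_adjacent_intervals
    ((sub 0 a le_rfl ha.le (by linarith)).trans (sub a e ha.le hae (by linarith)))
    (sub e (1-e) he0.le hee he1)
  have hs3 := intervalIntegral.integral_add_adjacent_intervals
    (((sub 0 a le_rfl ha.le (by linarith)).trans (sub a e ha.le hae (by linarith))).trans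
      (sub e (1-e) he0.le hee he1))
    (sub (1-e) 1 (by linarith) he1 le_rfl)
  have b1 : ∫ t in (0:ℝ)..a, Af n x t / t ≤ 4 := by
    have h := piece_const n x a ha.le (by linarith)
    have ee : 8 * (n:ℝ) * a = 4 := by rw [hadef]; field_simp; ring
    linarith
  have b2 : ∫ t in a..e, Af n x t / t ≤ 4 * Real.log 2 + 4*n*x := by
    have h := piece_inv n x a e ha hae (by linarith)
    have hea : e / a = 2 * ((n:ℝ)*x + 1) := by
      rw [hadef, hedef]; field_simp
    rw [hea, Real.log_mul (by norm_num) (by positivity)] at h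
    have hlog : Real.log ((n:ℝ)*x + 1) ≤ (n:ℝ)*x := by
      have h2 := Real.log_le_sub_one_of_pos (show (0:ℝ) < (n:ℝ)*x + 1 by positivity)
      linarith
    nlinarith [h]
  have b3 : ∫ t in e..(1-e), Af n x t / t = 0 := by
    rw [intervalIntegral.integral_congr (g := fun _ => (0:ℝ)), intervalIntegral.integral_zero]
    intro t htt
    rw [Set.uIcc_of_le hee] at htt
    have hz : Af n x t = 0 := by
      apply Af_zero n (by omega) x t hx0
      · have h1 := htt.1; rw [hedef] at h1; linarith
      · have h2 := htt.2; rw [hedef] at h2; linarith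
    show Af n x t / t = 0
    rw [hz, zero_div]
  have b4 : ∫ t in (1-e)..1, Af n x t / t ≤ 8*x + 2 := by
    have h := piece_inv n x (1-e) 1 (by linarith) he1 le_rfl
    have hpos : (0:ℝ) < 1 - e := by linarith
    have hlog : Real.log (1/(1-e)) ≤ 2*e := by
      have h1 := Real.log_le_sub_one_of_pos (show (0:ℝ) < 1/(1-e) by positivity)
      have h2 : 1/(1-e) - 1 = e/(1-e) := by field_simp; ring
      have h3 : e/(1-e) ≤ 2*e := by
        rw [div_le_iff₀ hpos]; nlinarith
      linarith
    have h8 : 8 * e ≤ 8*x + 2 := by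
      rw [hedef]; linarith
    nlinarith [h]
  linarith [hs1, hs2, hs3]


lemma c_bounds (n : ℕ) (hn : 2 ≤ n) (cn : ℝ)
    (h : (∫ x in (-2:ℝ)..2, cn * (1 - x ^ 2 / 4) ^ (n ^ 2)) = 1) :
    0 < cn ∧ cn ≤ n := by
  have hn0 : (0:ℝ) < n := by positivity
  have hcont : Continuous fun x:ℝ => (1 - x^2/4)^(n^2) := by fun_prop
  rw [intervalIntegral.integral_const_mul] at h
  obtain ⟨S, hSdef⟩ : ∃ S:ℝ, S = ∫ x in (-2:ℝ)..2, (1 - x ^ 2 / 4) ^ (n ^ 2) := ⟨_, rfl⟩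
  rw [← hSdef] at h
  have hSpos : 0 < S := by
    rw [hSdef]
    apply intervalIntegral.intervalIntegral_pos_of_pos_on
      (hcont.intervalIntegrable _ _) _ (by norm_num)
    intro x hx
    have : 0 < 1 - x^2/4 := by nlinarith [hx.1, hx.2]
    positivity
  have h2n : (2:ℝ) ≤ n := by exact_mod_cast hn
  have hinv : 1/(n:ℝ) ≤ 1/2 := by
    rw [div_le_div_iff₀ hn0 (by norm_num)]
    linarith
  have hne : (-1:ℝ)/(n:ℝ) = -(1/(n:ℝ)) := by ring
  have hinvpos : (0:ℝ) < 1/(n:ℝ) := by positivity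
  have hnonneg : ∀ x ∈ Set.Ioc (-2:ℝ) 2, 0 ≤ (1 - x^2/4)^(n^2) := by
    intro x hx
    have : 0 ≤ 1 - x^2/4 := by nlinarith [hx.1, hx.2]
    positivity
  have hA : (∫ x in (-1/(n:ℝ))..(1/(n:ℝ)), (1 - x ^ 2 / 4) ^ (n ^ 2)) ≤ S := by
    rw [hSdef]
    apply intervalIntegral.integral_mono_interval (by linarith [hne]) (by linarith [hne])
      (by linarith)
    · refine (ae_restrict_iff' measurableSet_Ioc).mpr (ae_of_all _ ?_)
      exact hnonneg
    · exact hcont.intervalIntegrable _ _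
  have hB : (∫ x in (-1/(n:ℝ))..(1/(n:ℝ)), (3/4:ℝ))
      ≤ ∫ x in (-1/(n:ℝ))..(1/(n:ℝ)), (1 - x ^ 2 / 4) ^ (n ^ 2) := by
    apply intervalIntegral.integral_mono_on (by linarith [hne])
      intervalIntegrable_const (hcont.intervalIntegrable _ _)
    intro x hx
    have hx2 : x^2 ≤ (1/(n:ℝ))^2 := by
      have h1 := hx.1; have h2 := hx.2
      rw [hne] at h1
      exact sq_le_sq' h1 h2
    have hbern : 1 + (n^2:ℕ) * (-(x^2/4)) ≤ (1 + (-(x^2/4)))^(n^2) :=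
      one_add_mul_le_pow (by nlinarith [hx2, hinv, hinvpos]) (n^2)
    have hcast : ((n^2:ℕ):ℝ) = (n:ℝ)^2 := by push_cast; ring
    rw [hcast] at hbern
    have hn2x2 : (n:ℝ)^2 * x^2 ≤ 1 := by
      have h5 := mul_le_mul_of_nonneg_left hx2 (le_of_lt (by positivity : (0:ℝ) < (n:ℝ)^2))
      have h6 : (n:ℝ)^2 * (1/(n:ℝ))^2 = 1 := by field_simp
      linarith
    have : (3/4:ℝ) ≤ 1 + (n:ℝ)^2 * (-(x^2/4)) := by nlinarith
    calc (3/4:ℝ) ≤ 1 + (n:ℝ)^2 * (-(x^2/4)) := this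
      _ ≤ (1 + (-(x^2/4)))^(n^2) := hbern
      _ = (1 - x^2/4)^(n^2) := by ring_nf
  have hC : (∫ x in (-1/(n:ℝ))..(1/(n:ℝ)), (3/4:ℝ)) = 3/(2*(n:ℝ)) := by
    rw [intervalIntegral.integral_const, smul_eq_mul]
    field_simp
    ring
  have hS32 : 3/(2*(n:ℝ)) ≤ S := by rw [← hC]; linarith
  have hcn_pos : 0 < cn := by
    rcases lt_trichotomy cn 0 with hlt | heq | hgt
    · nlinarith
    · rw [heq] at h; simp at h
    · exact hgt
  constructor
  · exact hcn_pos
  · -- cn * S = 1, S ≥ 3/(2n) → cn ≤ 2n/3 ≤ n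
    have : cn * (3/(2*(n:ℝ))) ≤ 1 := by nlinarith
    rw [← mul_div_assoc] at this
    have h2 : cn * 3 ≤ 2 * n := by
      rw [div_le_iff₀ (by positivity : (0:ℝ) < 2*(n:ℝ)), one_mul] at this
      linarith
    linarith

lemma xint (m : ℕ) : ∫ x in (0:ℝ)..2, x * (1 - x^2/4)^m = 2/((m:ℝ)+1) := by
  have hd : ∀ x ∈ Set.uIcc (0:ℝ) 2,
      HasDerivAt (fun y => -(2/((m:ℝ)+1)) * (1 - y^2/4)^(m+1)) (x * (1-x^2/4)^m) x := by
    intro x _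
    have h1 : HasDerivAt (fun y:ℝ => 1 - y^2/4) (-(x/2)) x := by
      have h0 := ((hasDerivAt_pow 2 x).div_const 4).const_sub 1
      refine h0.congr_deriv ?_
      simp; ring
    have h2 := h1.pow (m+1)
    have h3 := h2.const_mul (-(2/((m:ℝ)+1)))
    refine h3.congr_deriv ?_
    have hm : ((m:ℝ)+1) ≠ 0 := by positivity
    push_cast
    field_simp
  rw [intervalIntegral.integral_eq_sub_of_hasDerivAt hd
    ((by fun_prop : Continuous fun x:ℝ => x * (1 - x^2/4)^m).intervalIntegrable _ _)]
  norm_num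

lemma outer_nonneg (n : ℕ) (cn : ℝ) (hc0 : 0 ≤ cn) :
    0 ≤ ∫ x in (0:ℝ)..2,
      (∫ t in (0:ℝ)..1, Af n x t / t) * (cn * (1 - x ^ 2 / 4) ^ (n ^ 2)) := by
  apply intervalIntegral.integral_nonneg (by norm_num)
  intro x hx
  have hb : (0:ℝ) ≤ 1 - x^2/4 := by nlinarith [hx.1, hx.2]
  have : (0:ℝ) ≤ cn * (1 - x ^ 2 / 4) ^ (n ^ 2) := by positivity
  exact mul_nonneg (inner_nonneg n x) this

set_option maxHeartbeats 1000000 in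
lemma outer_bound (n : ℕ) (hn : 4 ≤ n) (cn : ℝ) (hc0 : 0 < cn) (hcn : cn ≤ n)
    (hnorm : (∫ x in (-2:ℝ)..2, cn * (1 - x ^ 2 / 4) ^ (n ^ 2)) = 1) :
    (∫ x in (0:ℝ)..2,
      (∫ t in (0:ℝ)..1, Af n x t / t) * (cn * (1 - x ^ 2 / 4) ^ (n ^ 2)))
    ≤ 40 + (4 + 4 * Real.log (2*n)) * ((n:ℝ) * (63/64:ℝ)^(n^2)) * (7/4) := by
  have hn0 : (0:ℝ) < n := by positivity
  have hn1 : (1:ℝ) ≤ n := by exact_mod_cast Nat.one_le_of_lt hn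
  have hlog2n : 0 ≤ Real.log (2*n) := by
    apply Real.log_nonneg; linarith
  have hr : (0:ℝ) ≤ (63/64:ℝ)^(n^2) := by positivity
  have hRHS2 : 0 ≤ (4 + 4 * Real.log (2*n)) * ((n:ℝ) * (63/64:ℝ)^(n^2)) * (7/4) := by
    apply mul_nonneg (mul_nonneg (by linarith) (mul_nonneg hn0.le hr)) (by norm_num)
  have hφ0 : ∀ x ∈ Set.Icc (-2:ℝ) 2, 0 ≤ cn * (1 - x ^ 2 / 4) ^ (n ^ 2) := by
    intro x hx
    have hb : (0:ℝ) ≤ 1 - x^2/4 := by nlinarith [hx.1, hx.2]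
    positivity
  have hφcont : Continuous fun x:ℝ => cn * (1 - x ^ 2 / 4) ^ (n ^ 2) := by fun_prop
  by_cases hint : IntervalIntegrable
      (fun x => (∫ t in (0:ℝ)..1, Af n x t / t) * (cn * (1 - x ^ 2 / 4) ^ (n ^ 2)))
      volume 0 2
  swap
  · rw [intervalIntegral.integral_undef hint]; linarith
  have hsub1 : Set.uIcc (0:ℝ) (1/4) ⊆ Set.uIcc (0:ℝ) 2 := by
    rw [Set.uIcc_of_le (by norm_num : (0:ℝ) ≤ 1/4), Set.uIcc_of_le (by norm_num : (0:ℝ) ≤ 2)]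
    exact Set.Icc_subset_Icc le_rfl (by norm_num)
  have hsub2 : Set.uIcc (1/4:ℝ) 2 ⊆ Set.uIcc (0:ℝ) 2 := by
    rw [Set.uIcc_of_le (by norm_num : (1/4:ℝ) ≤ 2), Set.uIcc_of_le (by norm_num : (0:ℝ) ≤ 2)]
    exact Set.Icc_subset_Icc (by norm_num) le_rfl
  have hsplit := intervalIntegral.integral_add_adjacent_intervals
    (hint.mono_set hsub1) (hint.mono_set hsub2)
  -- piece 1
  have hg1cont : Continuous fun x:ℝ =>
      (8 + 4*Real.log 2 + (4*(n:ℝ)+8)*x) * (cn * (1 - x ^ 2 / 4) ^ (n ^ 2)) := by fun_prop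
  have p1 : (∫ x in (0:ℝ)..(1/4),
      (∫ t in (0:ℝ)..1, Af n x t / t) * (cn * (1 - x ^ 2 / 4) ^ (n ^ 2))) ≤ 40 := by
    have step1 : (∫ x in (0:ℝ)..(1/4),
        (∫ t in (0:ℝ)..1, Af n x t / t) * (cn * (1 - x ^ 2 / 4) ^ (n ^ 2)))
        ≤ ∫ x in (0:ℝ)..(1/4),
          (8 + 4*Real.log 2 + (4*(n:ℝ)+8)*x) * (cn * (1 - x ^ 2 / 4) ^ (n ^ 2)) := by
      apply intervalIntegral.integral_mono_on (by norm_num) (hint.mono_set hsub1)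
        (hg1cont.intervalIntegrable _ _)
      intro x hx
      have hI := inner_small n hn x hx.1 hx.2
      have hφ : 0 ≤ cn * (1 - x ^ 2 / 4) ^ (n ^ 2) :=
        hφ0 x ⟨by linarith [hx.1], by linarith [hx.2]⟩
      have : (8 + 4*Real.log 2 + 4*(n:ℝ)*x + 8*x) = (8 + 4*Real.log 2 + (4*(n:ℝ)+8)*x) := by
        ring
      rw [← this]
      exact mul_le_mul_of_nonneg_right hI hφ
    have heq : (∫ x in (0:ℝ)..(1/4),
        (8 + 4*Real.log 2 + (4*(n:ℝ)+8)*x) * (cn * (1 - x ^ 2 / 4) ^ (n ^ 2)))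
        = (8 + 4*Real.log 2) * (∫ x in (0:ℝ)..(1/4), cn * (1 - x ^ 2 / 4) ^ (n ^ 2))
          + (4*(n:ℝ)+8) * cn * (∫ x in (0:ℝ)..(1/4), x * (1 - x ^ 2 / 4) ^ (n ^ 2)) := by
      rw [← intervalIntegral.integral_const_mul, ← intervalIntegral.integral_const_mul,
        ← intervalIntegral.integral_add]
      · apply intervalIntegral.integral_congr
        intro x _
        ring
      · exact (by fun_prop :
          Continuous fun x:ℝ => (8+4*Real.log 2) * (cn * (1 - x^2/4)^(n^2))).intervalIntegrable _ _
      · exact (by fun_prop :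
          Continuous fun x:ℝ => (4*(n:ℝ)+8) * cn * (x * (1 - x^2/4)^(n^2))).intervalIntegrable _ _
    have hφint : (∫ x in (0:ℝ)..(1/4), cn * (1 - x ^ 2 / 4) ^ (n ^ 2)) ≤ 1 := by
      calc (∫ x in (0:ℝ)..(1/4), cn * (1 - x ^ 2 / 4) ^ (n ^ 2))
          ≤ ∫ x in (-2:ℝ)..2, cn * (1 - x ^ 2 / 4) ^ (n ^ 2) := by
            apply intervalIntegral.integral_mono_interval (by norm_num) (by norm_num)
              (by norm_num)
            · refine (ae_restrict_iff' measurableSet_Ioc).mpr (ae_of_all _ ?_)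
              intro x hx
              exact hφ0 x ⟨hx.1.le, hx.2⟩
            · exact hφcont.intervalIntegrable _ _
        _ = 1 := hnorm
    have hxφint : (∫ x in (0:ℝ)..(1/4), x * (1 - x ^ 2 / 4) ^ (n ^ 2)) ≤ 2/((n:ℝ)^2+1) := by
      have hmono : (∫ x in (0:ℝ)..(1/4), x * (1 - x ^ 2 / 4) ^ (n ^ 2))
          ≤ ∫ x in (0:ℝ)..2, x * (1 - x ^ 2 / 4) ^ (n ^ 2) := by
        apply intervalIntegral.integral_mono_interval le_rfl (by norm_num) (by norm_num)
        · refine (ae_restrict_iff' measurableSet_Ioc).mpr (ae_of_all _ ?_)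
          intro x hx
          have hb : (0:ℝ) ≤ 1 - x^2/4 := by nlinarith [hx.1, hx.2]
          have hx0 : (0:ℝ) ≤ x := hx.1.le
          positivity
        · exact (by fun_prop :
            Continuous fun x:ℝ => x * (1 - x^2/4)^(n^2)).intervalIntegrable _ _
      have := xint (n^2)
      rw [this] at hmono
      have hcast : ((n^2:ℕ):ℝ) = (n:ℝ)^2 := by push_cast; ring
      rw [hcast] at hmono
      exact hmono
    have hxφnn : 0 ≤ (∫ x in (0:ℝ)..(1/4), x * (1 - x ^ 2 / 4) ^ (n ^ 2)) := by
      apply intervalIntegral.integral_nonneg (by norm_num)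
      intro x hx
      have hb : (0:ℝ) ≤ 1 - x^2/4 := by nlinarith [hx.1, hx.2]
      have hx0 : (0:ℝ) ≤ x := hx.1
      positivity
    have hlog2 : Real.log 2 ≤ 1 := by
      have := Real.log_le_sub_one_of_pos (show (0:ℝ) < 2 by norm_num)
      linarith
    have hlog2' : 0 ≤ Real.log 2 := Real.log_nonneg (by norm_num)
    have hterm2 : (4*(n:ℝ)+8) * cn * (∫ x in (0:ℝ)..(1/4), x * (1 - x ^ 2 / 4) ^ (n ^ 2))
        ≤ 24 := by
      have h1 : (4*(n:ℝ)+8) * cn * (∫ x in (0:ℝ)..(1/4), x * (1 - x ^ 2 / 4) ^ (n ^ 2))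
          ≤ (4*(n:ℝ)+8) * (n:ℝ) * (2/((n:ℝ)^2+1)) := by
        apply mul_le_mul
        · exact mul_le_mul_of_nonneg_left hcn (by linarith)
        · exact hxφint
        · exact hxφnn
        · positivity
      have h2 : (4*(n:ℝ)+8) * (n:ℝ) * (2/((n:ℝ)^2+1)) ≤ 24 := by
        rw [show (4*(n:ℝ)+8) * (n:ℝ) * (2/((n:ℝ)^2+1))
            = ((4*(n:ℝ)+8) * (n:ℝ) * 2)/((n:ℝ)^2+1) from by ring,
          div_le_iff₀ (by positivity : (0:ℝ) < (n:ℝ)^2+1)]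
        nlinarith
      linarith
    have hφintnn : 0 ≤ (∫ x in (0:ℝ)..(1/4), cn * (1 - x ^ 2 / 4) ^ (n ^ 2)) := by
      apply intervalIntegral.integral_nonneg (by norm_num)
      intro x hx
      exact hφ0 x ⟨by linarith [hx.1], by linarith [hx.2]⟩
    have hterm1 : (8 + 4*Real.log 2) * (∫ x in (0:ℝ)..(1/4), cn * (1 - x ^ 2 / 4) ^ (n ^ 2))
        ≤ 12 := by
      calc (8 + 4*Real.log 2) * (∫ x in (0:ℝ)..(1/4), cn * (1 - x ^ 2 / 4) ^ (n ^ 2))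
          ≤ (8 + 4*Real.log 2) * 1 := by
            exact mul_le_mul_of_nonneg_left hφint (by linarith)
        _ ≤ 12 := by linarith
    linarith [step1, heq.le, heq.ge]
  -- piece 2
  have p2 : (∫ x in (1/4:ℝ)..2,
      (∫ t in (0:ℝ)..1, Af n x t / t) * (cn * (1 - x ^ 2 / 4) ^ (n ^ 2)))
      ≤ (4 + 4 * Real.log (2*n)) * ((n:ℝ) * (63/64:ℝ)^(n^2)) * (7/4) := by
    have hM : ∀ x ∈ Set.Icc (1/4:ℝ) 2,
        (∫ t in (0:ℝ)..1, Af n x t / t) * (cn * (1 - x ^ 2 / 4) ^ (n ^ 2))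
        ≤ (4 + 4 * Real.log (2*n)) * ((n:ℝ) * (63/64:ℝ)^(n^2)) := by
      intro x hx
      have hb : (0:ℝ) ≤ 1 - x^2/4 := by nlinarith [hx.1, hx.2]
      have hb2 : 1 - x^2/4 ≤ 63/64 := by nlinarith [hx.1, hx.2]
      have hφle : cn * (1 - x ^ 2 / 4) ^ (n ^ 2) ≤ (n:ℝ) * (63/64:ℝ)^(n^2) :=
        mul_le_mul hcn (pow_le_pow_left₀ hb hb2 _) (pow_nonneg hb _) hn0.le
      have hφ : 0 ≤ cn * (1 - x ^ 2 / 4) ^ (n ^ 2) :=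
        mul_nonneg hc0.le (pow_nonneg hb _)
      calc (∫ t in (0:ℝ)..1, Af n x t / t) * (cn * (1 - x ^ 2 / 4) ^ (n ^ 2))
          ≤ (4 + 4 * Real.log (2*n)) * (cn * (1 - x ^ 2 / 4) ^ (n ^ 2)) :=
            mul_le_mul_of_nonneg_right (inner_crude n (by omega) x) hφ
        _ ≤ (4 + 4 * Real.log (2*n)) * ((n:ℝ) * (63/64:ℝ)^(n^2)) :=
            mul_le_mul_of_nonneg_left hφle (by linarith)
    calc (∫ x in (1/4:ℝ)..2,
        (∫ t in (0:ℝ)..1, Af n x t / t) * (cn * (1 - x ^ 2 / 4) ^ (n ^ 2)))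
        ≤ ∫ _x in (1/4:ℝ)..2, (4 + 4 * Real.log (2*n)) * ((n:ℝ) * (63/64:ℝ)^(n^2)) :=
          intervalIntegral.integral_mono_on (by norm_num) (hint.mono_set hsub2)
            intervalIntegrable_const hM
      _ = (4 + 4 * Real.log (2*n)) * ((n:ℝ) * (63/64:ℝ)^(n^2)) * (7/4) := by
          rw [intervalIntegral.integral_const, smul_eq_mul]
          ring
  linarith [hsplit]

lemma Vtendsto :
    Tendsto (fun n : ℕ => (4 + 4 * Real.log (2*n)) * ((n:ℝ) * (63/64:ℝ)^(n^2)) * (7/4))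
      atTop (nhds 0) := by
  have hup : Tendsto (fun n : ℕ => 14 * ((n:ℝ)^2 * (63/64:ℝ)^n)) atTop (nhds 0) := by
    have h := (tendsto_pow_const_mul_const_pow_of_lt_one 2
      (by norm_num : (0:ℝ) ≤ 63/64) (by norm_num : (63/64:ℝ) < 1)).const_mul (14:ℝ)
    simpa using h
  apply tendsto_of_tendsto_of_tendsto_of_le_of_le' tendsto_const_nhds hup
  · filter_upwards [eventually_ge_atTop 1] with n hn
    have hn0 : (0:ℝ) < n := by exact_mod_cast hn
    have hlog : 0 ≤ Real.log (2*n) := Real.log_nonneg (by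
      have : (1:ℝ) ≤ n := by exact_mod_cast hn
      linarith)
    have hr : (0:ℝ) ≤ (63/64:ℝ)^(n^2) := by positivity
    apply mul_nonneg (mul_nonneg (by linarith) (mul_nonneg hn0.le hr)) (by norm_num)
  · filter_upwards [eventually_ge_atTop 1] with n hn
    have hn1 : (1:ℝ) ≤ n := by exact_mod_cast hn
    have hn0 : (0:ℝ) < n := by linarith
    have h1 : 4 + 4 * Real.log (2*n) ≤ 8 * n := by
      have := Real.log_le_sub_one_of_pos (show (0:ℝ) < 2*n by linarith)
      linarith
    have h1' : 0 ≤ 4 + 4 * Real.log (2*n) := by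
      have : 0 ≤ Real.log (2*n) := Real.log_nonneg (by linarith)
      linarith
    have h2 : (63/64:ℝ)^(n^2) ≤ (63/64:ℝ)^n :=
      pow_le_pow_of_le_one (by norm_num) (by norm_num) (Nat.le_self_pow two_ne_zero n)
    have h3 : (0:ℝ) ≤ (63/64:ℝ)^n := by positivity
    have h4 : (0:ℝ) ≤ (63/64:ℝ)^(n^2) := by positivity
    have key : (4 + 4 * Real.log (2*n)) * ((n:ℝ) * (63/64:ℝ)^(n^2))
        ≤ (8*(n:ℝ)) * ((n:ℝ) * (63/64:ℝ)^n) := by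
      apply mul_le_mul h1 (mul_le_mul_of_nonneg_left h2 hn0.le)
        (mul_nonneg hn0.le h4) (by linarith)
    calc (4 + 4 * Real.log (2*n)) * ((n:ℝ) * (63/64:ℝ)^(n^2)) * (7/4)
        ≤ (8*(n:ℝ)) * ((n:ℝ) * (63/64:ℝ)^n) * (7/4) := by linarith
      _ = 14 * ((n:ℝ)^2 * (63/64:ℝ)^n) := by ring

theorem stmt8 (c : ℕ → ℝ)
    (hc : ∀ n : ℕ, 2 ≤ n →
      (∫ x in (-2:ℝ)..2, c n * (1 - x ^ 2 / 4) ^ (n ^ 2)) = 1)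
    (f : ℕ → ℝ → ℝ)
    (hf : ∀ n : ℕ, ∀ t : ℝ,
      f n t = max (-1) (min 1 ((n : ℝ) * t)) * max 0 (min 1 ((n : ℝ) * (1 - |t|)))) :
    Tendsto
      (fun n : ℕ =>
        (∫ x in (0:ℝ)..2,
          (∫ t in (0:ℝ)..1, |f n (t + x) + f n (t - x) - 2 * f n t| / t) *
            (c n * (1 - x ^ 2 / 4) ^ (n ^ 2))) / Real.log n)
      atTop (nhds 0) := by
  have hfF : f = F := funext fun n => funext fun t => hf n t
  subst hfF
  have hDef : ∀ n : ℕ, (∫ x in (0:ℝ)..2,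
      (∫ t in (0:ℝ)..1, |F n (t + x) + F n (t - x) - 2 * F n t| / t) *
        (c n * (1 - x ^ 2 / 4) ^ (n ^ 2)))
      = ∫ x in (0:ℝ)..2,
        (∫ t in (0:ℝ)..1, Af n x t / t) * (c n * (1 - x ^ 2 / 4) ^ (n ^ 2)) :=
    fun n => rfl
  apply tendsto_of_tendsto_of_tendsto_of_le_of_le' (g := fun _ : ℕ => (0:ℝ))
    (h := fun n : ℕ => 40 / Real.log n
      + (4 + 4 * Real.log (2*n)) * ((n:ℝ) * (63/64:ℝ)^(n^2)) * (7/4))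
    tendsto_const_nhds
  · have T1 : Tendsto (fun n : ℕ => 40 / Real.log n) atTop (nhds 0) :=
      Tendsto.div_atTop tendsto_const_nhds
        (Real.tendsto_log_atTop.comp tendsto_natCast_atTop_atTop)
    have := T1.add Vtendsto
    simpa using this
  · filter_upwards [eventually_ge_atTop 2] with n hn
    obtain ⟨hc0, _⟩ := c_bounds n hn (c n) (hc n hn)
    have hD : 0 ≤ ∫ x in (0:ℝ)..2,
        (∫ t in (0:ℝ)..1, Af n x t / t) * (c n * (1 - x ^ 2 / 4) ^ (n ^ 2)) :=
      outer_nonneg n (c n) hc0.le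
    have hlog : 0 ≤ Real.log n := Real.log_nonneg (by exact_mod_cast Nat.one_le_of_lt hn)
    show (0:ℝ) ≤ _ / Real.log n
    rw [hDef n]
    exact div_nonneg hD hlog
  · filter_upwards [eventually_ge_atTop 4] with n hn
    obtain ⟨hc0, hcn⟩ := c_bounds n (by omega) (c n) (hc n (by omega))
    have hD := outer_bound n hn (c n) hc0 hcn (hc n (by omega))
    have hDnn := outer_nonneg n (c n) hc0.le
    have hlog1 : (1:ℝ) ≤ Real.log n := by
      rw [Real.le_log_iff_exp_le (by positivity : (0:ℝ) < n)]
      have h1 : Real.exp 1 < 2.7182818286 := Real.exp_one_lt_d9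
      have h2 : (4:ℝ) ≤ n := by exact_mod_cast hn
      linarith
    have hlog0 : (0:ℝ) < Real.log n := by linarith
    have hV0 : 0 ≤ (4 + 4 * Real.log (2*n)) * ((n:ℝ) * (63/64:ℝ)^(n^2)) * (7/4) := by
      have hn0 : (0:ℝ) < n := by positivity
      have hlog : 0 ≤ Real.log (2*n) := Real.log_nonneg (by
        have : (1:ℝ) ≤ n := by exact_mod_cast Nat.one_le_of_lt hn
        linarith)
      have hr : (0:ℝ) ≤ (63/64:ℝ)^(n^2) := by positivity
      exact mul_nonneg (mul_nonneg (by linarith) (mul_nonneg hn0.le hr)) (by norm_num)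
    show _ / Real.log n ≤ _
    rw [hDef n]
    calc (∫ x in (0:ℝ)..2,
          (∫ t in (0:ℝ)..1, Af n x t / t) * (c n * (1 - x ^ 2 / 4) ^ (n ^ 2))) / Real.log n
        ≤ (40 + (4 + 4 * Real.log (2*n)) * ((n:ℝ) * (63/64:ℝ)^(n^2)) * (7/4)) / Real.log n :=
          div_le_div_of_nonneg_right hD hlog0.le
      _ = 40 / Real.log n
          + ((4 + 4 * Real.log (2*n)) * ((n:ℝ) * (63/64:ℝ)^(n^2)) * (7/4)) / Real.log n := by
          rw [add_div]
      _ ≤ 40 / Real.log n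
          + (4 + 4 * Real.log (2*n)) * ((n:ℝ) * (63/64:ℝ)^(n^2)) * (7/4) := by
          have := div_le_self hV0 hlog1
          linarith
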